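/- For all a ∈ ℕ and all t ≥ a+1, the discounted sum of temporal-difference errors satisfies the exact identity Σ_{b=a}^{t−1} (γλ)^{b−a} δ_{a,b} = G_a^{λ|t} − u_a − Σ_{b=a}^{t−1} (γλ)^{b−a} (w_b − u_b) P(b,a). (The final sum is the correction term which is O(α) in the paper's setting, since w_b − u_b represents g(h_b;θ_b) − g(h_b;θ_{b−1}).) -/
import Mathlib


open Finset Matrix

noncomputable section

/-- Propagator `Pfrom J a n = P(a+n, a) = J_{a+n-1} ⋯ J_a`. -/
def Pfrom {d : ℕ} (J : ℕ → Matrix (Fin d) (Fin d) ℝ) (a : ℕ) : ℕ → Matrix (Fin d) (Fin d) ℝ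
  | 0 => 1
  | n + 1 => J (a + n) * Pfrom J a n

/-- Propagator `P J b a = P(b, a) = J_{b-1} ⋯ J_a` (for `b ≥ a`). -/
def P {d : ℕ} (J : ℕ → Matrix (Fin d) (Fin d) ℝ) (b a : ℕ) : Matrix (Fin d) (Fin d) ℝ :=
  Pfrom J a (b - a)

/-- The n-step synthetic gradient `G_a^{(n)}`. -/
def Gn {d : ℕ} (γ : ℝ) (J : ℕ → Matrix (Fin d) (Fin d) ℝ) (c u : ℕ → Fin d → ℝ)
    (a n : ℕ) : Fin d → ℝ :=
  (∑ k ∈ Finset.range n, γ ^ k • Matrix.vecMul (c (a + k + 1)) (P J (a + k + 1) a))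
    + γ ^ n • Matrix.vecMul (u (a + n)) (P J (a + n) a)

/-- The interim λ-weighted synthetic gradient `G_a^{λ|H}`. -/
def GLam {d : ℕ} (γ lam : ℝ) (J : ℕ → Matrix (Fin d) (Fin d) ℝ) (c u : ℕ → Fin d → ℝ)
    (a H : ℕ) : Fin d → ℝ :=
  (1 - lam) • (∑ n ∈ Finset.range (H - a - 1), lam ^ n • Gn γ J c u a (n + 1))
    + lam ^ (H - a - 1) • Gn γ J c u a (H - a)

/-- The modified temporal-difference error `δ'_{a,t}`. -/
def δ' {d : ℕ} (γ : ℝ) (J : ℕ → Matrix (Fin d) (Fin d) ℝ) (c u : ℕ → Fin d → ℝ)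
    (a t : ℕ) : Fin d → ℝ :=
  Matrix.vecMul (c (t + 1) + γ • u (t + 1)) (P J (t + 1) a) - Matrix.vecMul (u t) (P J t a)

/-- The temporal-difference error `δ_t`. -/
def δtd {d : ℕ} (γ : ℝ) (J : ℕ → Matrix (Fin d) (Fin d) ℝ) (c u w : ℕ → Fin d → ℝ)
    (t : ℕ) : Fin d → ℝ :=
  Matrix.vecMul (c (t + 1) + γ • u (t + 1)) (P J (t + 1) t) - w t

/-- `δ_{a,t} = δ_t P(t,a)`. -/
def δab {d : ℕ} (γ : ℝ) (J : ℕ → Matrix (Fin d) (Fin d) ℝ) (c u w : ℕ → Fin d → ℝ)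
    (a t : ℕ) : Fin d → ℝ :=
  Matrix.vecMul (δtd γ J c u w t) (P J t a)

lemma P_succ_left {d : ℕ} (J : ℕ → Matrix (Fin d) (Fin d) ℝ) {a b : ℕ} (hab : a ≤ b) :
    P J (b + 1) a = J b * P J b a := by
  unfold P
  rw [Nat.succ_sub hab]
  show J (a + (b - a)) * _ = _
  rw [Nat.add_sub_cancel' hab]

lemma δab_eq {d : ℕ} (γ : ℝ) (J : ℕ → Matrix (Fin d) (Fin d) ℝ) (c u w : ℕ → Fin d → ℝ)
    {a b : ℕ} (hab : a ≤ b) :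
    δab γ J c u w a b = δ' γ J c u a b - Matrix.vecMul (w b - u b) (P J b a) := by
  unfold δab δtd δ'
  have h1 : P J (b + 1) b = J b := by
    unfold P; rw [Nat.succ_sub (le_refl b), Nat.sub_self]
    show J (b + 0) * (1 : Matrix (Fin d) (Fin d) ℝ) = J b
    rw [mul_one, Nat.add_zero]
  rw [h1, Matrix.sub_vecMul, Matrix.sub_vecMul, Matrix.vecMul_vecMul,
    ← P_succ_left J hab]
  abel

lemma smul_vecMul' {d : ℕ} (γ : ℝ) (v : Fin d → ℝ) (A : Matrix (Fin d) (Fin d) ℝ) :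
    Matrix.vecMul (γ • v) A = γ • Matrix.vecMul v A := by
  ext j; simp [Matrix.vecMul, dotProduct, Finset.mul_sum, mul_assoc]

lemma Gn_succ {d : ℕ} (γ : ℝ) (J : ℕ → Matrix (Fin d) (Fin d) ℝ) (c u : ℕ → Fin d → ℝ)
    (a n : ℕ) :
    Gn γ J c u a (n + 1) = Gn γ J c u a n + γ ^ n • δ' γ J c u a (a + n) := by
  unfold Gn δ'
  rw [Finset.sum_range_succ, Matrix.add_vecMul, smul_vecMul',
    show a + (n + 1) = a + n + 1 from rfl]
  module

lemma sum_delta'_eq {d : ℕ} (γ lam : ℝ) (J : ℕ → Matrix (Fin d) (Fin d) ℝ)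
    (c u : ℕ → Fin d → ℝ) (a : ℕ) : ∀ n : ℕ,
    ∑ i ∈ Finset.range (n + 1), (γ * lam) ^ i • δ' γ J c u a (a + i)
      = GLam γ lam J c u a (a + n + 1) - u a := by
  intro n
  induction n with
  | zero =>
    unfold GLam Gn δ'
    have h1 : a + 0 + 1 - a - 1 = 0 := by omega
    have h2 : a + 0 + 1 - a = 1 := by omega
    rw [h1, h2]
    have h3 : P J a a = 1 := by
      unfold P; rw [Nat.sub_self]; rfl
    simp [h3, Matrix.vecMul_one, Matrix.add_vecMul, smul_vecMul']
  | succ n ih =>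
    rw [Finset.sum_range_succ, ih]
    have key : GLam γ lam J c u a (a + (n + 1) + 1)
        = GLam γ lam J c u a (a + n + 1) + (γ * lam) ^ (n + 1) • δ' γ J c u a (a + (n + 1)) := by
      unfold GLam
      have e1 : a + (n + 1) + 1 - a - 1 = n + 1 := by omega
      have e2 : a + (n + 1) + 1 - a = n + 2 := by omega
      have e3 : a + n + 1 - a - 1 = n := by omega
      have e4 : a + n + 1 - a = n + 1 := by omega
      rw [e1, e2, e3, e4, Finset.sum_range_succ, Gn_succ γ J c u a (n + 1),
        show a + (n + 1) = a + n + 1 from rfl]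
      module
    rw [key]
    abel

/-- exact identity for the discounted sum of temporal-difference
errors, with the O(α) correction term made explicit:
`Σ_{b=a}^{t−1} (γλ)^{b−a} δ_{a,b} = G_a^{λ|t} − u_a − Σ_{b=a}^{t−1} (γλ)^{b−a} (w_b − u_b) P(b,a)`. -/
theorem discounted_td_with_correction {d : ℕ} (γ lam : ℝ)
    (J : ℕ → Matrix (Fin d) (Fin d) ℝ) (c u w : ℕ → Fin d → ℝ)
    (a t : ℕ) (h : a + 1 ≤ t) :
    ∑ b ∈ Finset.Icc a (t - 1), (γ * lam) ^ (b - a) • δab γ J c u w a b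
      = GLam γ lam J c u a t - u a
        - ∑ b ∈ Finset.Icc a (t - 1), (γ * lam) ^ (b - a) • Matrix.vecMul (w b - u b) (P J b a) := by
  have hIcc : Finset.Icc a (t - 1) = Finset.Ico a t := by
    rw [← Finset.Ico_add_one_right_eq_Icc]
    congr 1
    omega
  have hsplit : ∀ b ∈ Finset.Icc a (t - 1),
      (γ * lam) ^ (b - a) • δab γ J c u w a b
        = (γ * lam) ^ (b - a) • δ' γ J c u a b
          - (γ * lam) ^ (b - a) • Matrix.vecMul (w b - u b) (P J b a) := by
    intro b hb
    rw [Finset.mem_Icc] at hb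
    rw [δab_eq γ J c u w hb.1, smul_sub]
  rw [Finset.sum_congr rfl hsplit, Finset.sum_sub_distrib]
  have hmain : ∑ b ∈ Finset.Icc a (t - 1), (γ * lam) ^ (b - a) • δ' γ J c u a b
      = GLam γ lam J c u a t - u a := by
    rw [hIcc, Finset.sum_Ico_eq_sum_range]
    have ht : t - a = (t - a - 1) + 1 := by omega
    rw [ht]
    have hkey := sum_delta'_eq γ lam J c u a (t - a - 1)
    have htt : a + (t - a - 1) + 1 = t := by omega
    rw [htt] at hkey
    rw [← hkey]
    apply Finset.sum_congr rfl
    intro i _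
    rw [Nat.add_sub_cancel_left]
  rw [hmain]

end
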